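/- Let X ∈ ℝ^{d×n} be a matrix with no zero rows, let Λ be the diagonal d×d matrix with Λ_{ii} equal to the squared Euclidean norm of the i-th row of X, and denote by λ₁(X·Xᵀ) and λ_d(X·Xᵀ) the smallest and largest eigenvalues of X·Xᵀ and by λ₁(Λ) the smallest diagonal entry of Λ. If γ₁ > (λ_d(X·Xᵀ) − λ₁(X·Xᵀ)) / λ₁(Λ) and P = (X·Xᵀ + γ₁·Λ)⁻¹ · X·Xᵀ, then I − P·Pᵀ is a positive definite matrix. -/

import Mathlib

open Matrix

lemma spectral_decomp {m : ℕ} (A : Matrix (Fin m) (Fin m) ℝ) (hA : A.IsHermitian) (y : Fin m → ℝ) :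
    ∃ z : Fin m → ℝ,
      (y ⬝ᵥ y = ∑ i, z i ^ 2) ∧
      (y ⬝ᵥ (A *ᵥ y) = ∑ i, hA.eigenvalues i * z i ^ 2) ∧
      ((A *ᵥ y) ⬝ᵥ (A *ᵥ y) = ∑ i, (hA.eigenvalues i * z i) ^ 2) ∧
      (y ≠ 0 → z ≠ 0) := by
  set U : Matrix (Fin m) (Fin m) ℝ := (hA.eigenvectorUnitary : Matrix (Fin m) (Fin m) ℝ) with hU
  have hU1 : star U * U = 1 := Unitary.coe_star_mul_self _
  have hU2 : U * star U = 1 := (Matrix.mem_unitaryGroup_iff).mp hA.eigenvectorUnitary.2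
  set z : Fin m → ℝ := star U *ᵥ y with hz
  have hy : U *ᵥ z = y := by
    rw [hz, mulVec_mulVec, hU2, one_mulVec]
  have hdot : ∀ a b : Fin m → ℝ, (U *ᵥ a) ⬝ᵥ (U *ᵥ b) = a ⬝ᵥ b := by
    intro a b
    rw [dotProduct_mulVec, ← mulVec_transpose]
    have : Uᵀ = star U := by
      rw [star_eq_conjTranspose, conjTranspose_eq_transpose_of_trivial]
    rw [this, mulVec_mulVec, hU1, one_mulVec]
  have hspec := hA.spectral_theorem
  have hD : (RCLike.ofReal ∘ hA.eigenvalues : Fin m → ℝ) = hA.eigenvalues := by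
    funext i; simp
  have hAy : A *ᵥ y = U *ᵥ (diagonal hA.eigenvalues *ᵥ z) := by
    conv_lhs => rw [hspec]
    rw [Unitary.conjStarAlgAut_apply]
    rw [← hU, hD, ← mulVec_mulVec, ← mulVec_mulVec, hz]
  refine ⟨z, ?_, ?_, ?_, ?_⟩
  · rw [← hy, hdot]
    simp [dotProduct, sq]
  · rw [hAy]
    conv_lhs => rw [← hy]
    rw [hdot]
    simp [dotProduct, mulVec_diagonal, sq]
    exact Finset.sum_congr rfl fun i _ => by ring
  · rw [hAy, hdot]
    simp [dotProduct, mulVec_diagonal, sq]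
  · intro hy0 hz0
    rw [hz0, mulVec_zero] at hy
    exact hy0 hy.symm

/-- If `γ₁ > (λ_d(XXᵀ) − λ₁(XXᵀ)) / λ₁(Λ)` and `P = (XXᵀ + γ₁Λ)⁻¹ XXᵀ`, where `Λ` is
the diagonal matrix of squared row norms of `X` (and `X` has no zero rows), then
`I − PPᵀ` is positive definite. -/
theorem one_sub_PPt_posDef {d n : ℕ} (hd : 0 < d)
    (X : Matrix (Fin d) (Fin n) ℝ)
    (hrows : ∀ i, ∃ j, X i j ≠ 0)
    (v : Fin d → ℝ) (hv : ∀ i, v i = ∑ j, X i j ^ 2)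
    (hH : (X * Xᵀ).IsHermitian) (γ₁ : ℝ)
    (hγ₁ : γ₁ > ((⨆ i, hH.eigenvalues i) - ⨅ i, hH.eigenvalues i) / ⨅ i, v i)
    (P : Matrix (Fin d) (Fin d) ℝ)
    (hP : P = (X * Xᵀ + γ₁ • Matrix.diagonal v)⁻¹ * (X * Xᵀ)) :
    (1 - P * Pᵀ).PosDef := by
  have : Nonempty (Fin d) := ⟨⟨0, hd⟩⟩
  set A : Matrix (Fin d) (Fin d) ℝ := X * Xᵀ with hA
  set e : Fin d → ℝ := hH.eigenvalues with he
  set M : Matrix (Fin d) (Fin d) ℝ := A + γ₁ • Matrix.diagonal v with hM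
  set llo : ℝ := ⨅ i, e i with hllo
  set lhi : ℝ := ⨆ i, e i with hlhi
  set lΛ : ℝ := ⨅ i, v i with hlΛ
  -- basic positivity facts
  have hvpos : ∀ i, 0 < v i := by
    intro i
    rw [hv i]
    obtain ⟨j, hj⟩ := hrows i
    exact Finset.sum_pos' (fun j _ => sq_nonneg _) ⟨j, Finset.mem_univ j, by positivity⟩
  have hlΛ_le : ∀ i, lΛ ≤ v i := fun i => ciInf_le (Set.Finite.bddBelow (Set.finite_range v)) i
  have hlΛpos : 0 < lΛ := by
    obtain ⟨i, hi⟩ := exists_eq_ciInf_of_finite (f := v)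
    rw [hlΛ, ← hi]; exact hvpos i
  have hAPSD : A.PosSemidef := by
    have := Matrix.posSemidef_self_mul_conjTranspose X
    rwa [Matrix.conjTranspose_eq_transpose_of_trivial] at this
  have he_nonneg : ∀ i, 0 ≤ e i := fun i => hAPSD.eigenvalues_nonneg i
  have hlo_le : ∀ i, llo ≤ e i := fun i => ciInf_le (Set.Finite.bddBelow (Set.finite_range e)) i
  have hle_hi : ∀ i, e i ≤ lhi := fun i => le_ciSup (Set.Finite.bddAbove (Set.finite_range e)) i
  have hllo_nonneg : 0 ≤ llo := by
    obtain ⟨i, hi⟩ := exists_eq_ciInf_of_finite (f := e)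
    rw [hllo, ← hi]; exact he_nonneg i
  have hlhi_nonneg : 0 ≤ lhi := le_trans (he_nonneg (Classical.arbitrary _)) (hle_hi _)
  have hlohi : llo ≤ lhi := le_trans (hlo_le (Classical.arbitrary _)) (hle_hi _)
  have hγpos : 0 < γ₁ :=
    lt_of_le_of_lt (div_nonneg (sub_nonneg.mpr hlohi) hlΛpos.le) hγ₁
  have hkey : lhi < llo + γ₁ * lΛ := by
    have := (div_lt_iff₀ hlΛpos).mp hγ₁
    linarith
  set c : ℝ := llo + γ₁ * lΛ with hc
  have hc_nonneg : 0 ≤ c := by positivity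
  -- M is positive definite
  have hγdiag : γ₁ • Matrix.diagonal v = Matrix.diagonal (fun i => γ₁ * v i) := by
    rw [← Matrix.diagonal_smul]; rfl
  have hMPD : M.PosDef := by
    rw [hM, hγdiag]
    exact Matrix.PosDef.posSemidef_add hAPSD
      (Matrix.PosDef.diagonal fun i => mul_pos hγpos (hvpos i))
  have hMdet : IsUnit M.det := hMPD.det_pos.ne'.isUnit
  have hAT : Aᵀ = A := by
    have := hH
    rwa [Matrix.IsHermitian, Matrix.conjTranspose_eq_transpose_of_trivial] at this
  have hMT : Mᵀ = M := by
    have := hMPD.isHermitian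
    rwa [Matrix.IsHermitian, Matrix.conjTranspose_eq_transpose_of_trivial] at this
  have hPT : Pᵀ = A * M⁻¹ := by
    rw [hP, Matrix.transpose_mul, Matrix.transpose_nonsing_inv, hMT, hAT]
  rw [Matrix.posDef_iff_dotProduct_mulVec]
  constructor
  · refine Matrix.isHermitian_one.sub ?_
    have := Matrix.isHermitian_mul_conjTranspose_self P
    rwa [Matrix.conjTranspose_eq_transpose_of_trivial] at this
  · intro x hx
    set y : Fin d → ℝ := M⁻¹ *ᵥ x with hy
    have hxy : x = M *ᵥ y := by
      rw [hy, Matrix.mulVec_mulVec, Matrix.mul_nonsing_inv _ hMdet, Matrix.one_mulVec]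
    have hyne : y ≠ 0 := by
      intro h0
      rw [h0, Matrix.mulVec_zero] at hxy
      exact hx hxy
    have hPTx : Pᵀ *ᵥ x = A *ᵥ y := by
      rw [hPT, ← Matrix.mulVec_mulVec, ← hy]
    have hgoal : star x ⬝ᵥ ((1 - P * Pᵀ) *ᵥ x) = x ⬝ᵥ x - (A *ᵥ y) ⬝ᵥ (A *ᵥ y) := by
      rw [star_trivial, Matrix.sub_mulVec, Matrix.one_mulVec, dotProduct_sub,
        ← Matrix.mulVec_mulVec, Matrix.dotProduct_mulVec, ← Matrix.mulVec_transpose, hPTx]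
    rw [hgoal, sub_pos]
    -- spectral decomposition of y
    obtain ⟨z, hz1, hz2, hz3, hz4⟩ := spectral_decomp A hH y
    set S : ℝ := ∑ i, z i ^ 2 with hS
    have hSpos : 0 < S := by
      obtain ⟨i, hi⟩ := Function.ne_iff.mp (hz4 hyne)
      exact Finset.sum_pos' (fun j _ => sq_nonneg _) ⟨i, Finset.mem_univ i, lt_of_le_of_ne (sq_nonneg _) (Ne.symm (pow_ne_zero 2 (by simpa using hi)))⟩
    -- upper bound on ‖A y‖²
    have hup : (A *ᵥ y) ⬝ᵥ (A *ᵥ y) ≤ lhi ^ 2 * S := by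
      rw [hz3, hS, Finset.mul_sum]
      refine Finset.sum_le_sum fun i _ => ?_
      have h1 : (e i * z i) ^ 2 = e i ^ 2 * z i ^ 2 := by ring
      rw [h1]
      exact mul_le_mul_of_nonneg_right
        (pow_le_pow_left₀ (he_nonneg i) (hle_hi i) 2) (sq_nonneg _)
    -- lower bound on quadratic form of M
    have hdiagquad : y ⬝ᵥ (Matrix.diagonal v *ᵥ y) = ∑ i, v i * y i ^ 2 := by
      simp [dotProduct, Matrix.mulVec_diagonal, sq]
      exact Finset.sum_congr rfl fun i _ => by ring
    have hyy : y ⬝ᵥ y = S := hz1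
    have hyyS : ∑ i, y i ^ 2 = S := by
      rw [← hyy, dotProduct]
      exact Finset.sum_congr rfl fun i _ => (sq (y i)).symm ▸ by ring
    have hq : c * S ≤ y ⬝ᵥ (M *ᵥ y) := by
      rw [hM, Matrix.add_mulVec, dotProduct_add, hz2, Matrix.smul_mulVec,
        dotProduct_smul, hdiagquad]
      have h1 : llo * S ≤ ∑ i, e i * z i ^ 2 := by
        rw [hS, Finset.mul_sum]
        exact Finset.sum_le_sum fun i _ =>
          mul_le_mul_of_nonneg_right (hlo_le i) (sq_nonneg _)
      have h2 : lΛ * S ≤ ∑ i, v i * y i ^ 2 := by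
        rw [← hyyS, Finset.mul_sum]
        exact Finset.sum_le_sum fun i _ =>
          mul_le_mul_of_nonneg_right (hlΛ_le i) (sq_nonneg _)
      have := mul_le_mul_of_nonneg_left h2 hγpos.le
      rw [hc]
      simp only [smul_eq_mul]
      nlinarith
    -- Cauchy-Schwarz
    have hCS : (y ⬝ᵥ (M *ᵥ y)) ^ 2 ≤ S * ((M *ᵥ y) ⬝ᵥ (M *ᵥ y)) := by
      have := Finset.sum_mul_sq_le_sq_mul_sq Finset.univ y (M *ᵥ y)
      have h1 : y ⬝ᵥ (M *ᵥ y) = ∑ i, y i * (M *ᵥ y) i := rfl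
      have h2 : (M *ᵥ y) ⬝ᵥ (M *ᵥ y) = ∑ i, (M *ᵥ y) i ^ 2 := by
        rw [dotProduct]
        exact Finset.sum_congr rfl fun i _ => (sq _).symm
      rw [h1, h2, ← hyyS]
      exact this
    have hMy : c ^ 2 * S ≤ (M *ᵥ y) ⬝ᵥ (M *ᵥ y) := by
      have hq2 : (c * S) ^ 2 ≤ (y ⬝ᵥ (M *ᵥ y)) ^ 2 :=
        pow_le_pow_left₀ (by positivity) hq 2
      nlinarith [hq2, hCS, hSpos]
    calc (A *ᵥ y) ⬝ᵥ (A *ᵥ y) ≤ lhi ^ 2 * S := hup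
      _ < c ^ 2 * S := by
          apply mul_lt_mul_of_pos_right _ hSpos
          exact pow_lt_pow_left₀ hkey hlhi_nonneg (by norm_num)
      _ ≤ (M *ᵥ y) ⬝ᵥ (M *ᵥ y) := hMy
      _ = x ⬝ᵥ x := by rw [← hxy]
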